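/- Let α > 1/2 be a constant and let n = 2m be even. Let G be a graph on vertex set [n] with minimum degree at least αn, fix an edge e = {x, y} of K_n, and let M be a uniformly random perfect matching of K_n conditioned to contain e. Then there exists a constant c > 0 (depending only on α) such that for all sufficiently large n, the probability that the degree of the vertex e in Π(G ∪ M) is at most (2α − 1)³ n / 2 is at most exp(−c(2α−1)⁶ n). -/

import Mathlib

set_option maxHeartbeats 1000000


open Finset
open scoped Classical

/-- `M` is a perfect matching of the complete graph on `Fin n`. -/
def IsPerfMatching (n : ℕ) (M : Finset (Sym2 (Fin n))) : Prop :=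
  (∀ e ∈ M, ¬ e.IsDiag) ∧ ∀ v : Fin n, ∃! e, e ∈ M ∧ v ∈ e

/-- The collection of all perfect matchings of the complete graph on `Fin n`. -/
noncomputable def matchings (n : ℕ) : Finset (Finset (Sym2 (Fin n))) :=
  Finset.univ.filter (IsPerfMatching n)

/-- Adjacency of the graph `Π(H)` on the matching `M`: two matching edges `e ≠ f`
are adjacent when the subgraph of `H` induced by the four vertices of `e ∪ f` is `K₄`. -/
def PiAdj {n : ℕ} (H : SimpleGraph (Fin n)) (M : Finset (Sym2 (Fin n)))
    (e f : Sym2 (Fin n)) : Prop :=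
  e ∈ M ∧ f ∈ M ∧ e ≠ f ∧
    ∀ u v : Fin n, (u ∈ e ∨ u ∈ f) → (v ∈ e ∨ v ∈ f) → u ≠ v → H.Adj u v

namespace PMwork

variable {n : ℕ}

/-- partner of `v` in matching `M` -/
noncomputable def pr (M : Finset (Sym2 (Fin n))) (v : Fin n) : Fin n :=
  if h : ∃ w, s(v, w) ∈ M then h.choose else v

theorem edge_unique {M : Finset (Sym2 (Fin n))} (hM : IsPerfMatching n M)
    {e f : Sym2 (Fin n)} {v : Fin n} (he : e ∈ M) (hf : f ∈ M) (hve : v ∈ e) (hvf : v ∈ f) :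
    e = f := by
  obtain ⟨g, _, hg⟩ := hM.2 v
  rw [hg e ⟨he, hve⟩, hg f ⟨hf, hvf⟩]

theorem pr_spec {M : Finset (Sym2 (Fin n))} (hM : IsPerfMatching n M) (v : Fin n) :
    s(v, pr M v) ∈ M := by
  obtain ⟨e, ⟨heM, hve⟩, _⟩ := hM.2 v
  induction e using Sym2.inductionOn with
  | hf a b =>
    rw [Sym2.mem_iff] at hve
    have h : ∃ w, s(v, w) ∈ M := by
      rcases hve with rfl | rfl
      · exact ⟨b, heM⟩
      · exact ⟨a, by rwa [Sym2.eq_swap]⟩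
    rw [pr, dif_pos h]
    exact h.choose_spec

theorem pr_eq {M : Finset (Sym2 (Fin n))} (hM : IsPerfMatching n M) {v w : Fin n}
    (h : s(v, w) ∈ M) : pr M v = w := by
  have h1 := pr_spec hM v
  have h2 := edge_unique hM h1 h (Sym2.mem_mk_left _ _) (Sym2.mem_mk_left _ _)
  have hd := hM.1 _ h
  rw [Sym2.isDiag_iff_proj_eq] at hd
  rw [Sym2.eq_iff] at h2
  rcases h2 with ⟨-, rfl⟩ | ⟨h3, h4⟩
  · rfl
  · simp [h3, ← h4] at hd

theorem pr_ne {M : Finset (Sym2 (Fin n))} (hM : IsPerfMatching n M) (v : Fin n) :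
    pr M v ≠ v := by
  intro h
  have := hM.1 _ (pr_spec hM v)
  rw [h] at this
  exact this (Sym2.isDiag_iff_proj_eq.2 rfl)

theorem pr_pr {M : Finset (Sym2 (Fin n))} (hM : IsPerfMatching n M) (v : Fin n) :
    pr M (pr M v) = v := pr_eq hM (by rw [Sym2.eq_swap]; exact pr_spec hM v)

theorem mem_edge_iff {M : Finset (Sym2 (Fin n))} (hM : IsPerfMatching n M) {f : Sym2 (Fin n)}
    (hf : f ∈ M) {v : Fin n} : v ∈ f ↔ f = s(v, pr M v) := by
  constructor
  · intro hv
    exact edge_unique hM hf (pr_spec hM v) hv (Sym2.mem_mk_left _ _)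
  · rintro rfl; exact Sym2.mem_mk_left _ _


noncomputable def eFin (f : Sym2 (Fin n)) : Finset (Fin n) := univ.filter (· ∈ f)

noncomputable def insideE (S : Finset (Fin n)) (M : Finset (Sym2 (Fin n))) :
    Finset (Sym2 (Fin n)) := M.filter (fun f => ∀ v ∈ f, v ∈ S)

theorem card_filter_in {M : Finset (Sym2 (Fin n))} (hM : IsPerfMatching n M)
    (S : Finset (Fin n)) :
    (S.filter fun s => pr M s ∈ S).card = 2 * (insideE S M).card := by
  have hset : (S.filter fun s => pr M s ∈ S) = (insideE S M).biUnion eFin := by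
    ext v
    simp only [mem_filter, mem_biUnion, insideE, eFin, mem_univ, true_and]
    constructor
    · rintro ⟨hv, hpv⟩
      refine ⟨s(v, pr M v), ⟨pr_spec hM v, ?_⟩, Sym2.mem_mk_left _ _⟩
      intro u hu
      rw [Sym2.mem_iff] at hu
      rcases hu with rfl | rfl <;> assumption
    · rintro ⟨f, ⟨hfM, hfS⟩, hvf⟩
      have he := (mem_edge_iff hM hfM).1 hvf
      refine ⟨hfS v hvf, hfS _ ?_⟩
      rw [he]; exact Sym2.mem_mk_right _ _
  rw [hset, card_biUnion, Finset.sum_congr rfl (fun f hf => ?_), Finset.sum_const, smul_eq_mul,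
    mul_comm]
  · simp only [insideE, mem_filter] at hf
    obtain ⟨hfM, -⟩ := hf
    induction f using Sym2.inductionOn with
    | hf a b =>
      have hd := hM.1 _ hfM
      rw [Sym2.isDiag_iff_proj_eq] at hd
      have : eFin (s(a, b) : Sym2 (Fin n)) = {a, b} := by
        ext u; simp [eFin, Sym2.mem_iff]
      rw [this, card_insert_of_notMem (by simpa using hd), card_singleton]
  · intro f hfM g hgM hfg
    simp only [mem_coe, insideE, mem_filter] at hfM hgM
    rw [Function.onFun, Finset.disjoint_left]
    intro v hvf hvg
    simp only [eFin, mem_filter, mem_univ, true_and] at hvf hvg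
    exact hfg (edge_unique hM hfM.1 hgM.1 hvf hvg)

section part
variable {M : Finset (Sym2 (Fin n))} (hM : IsPerfMatching n M) {x y : Fin n}
  {S O : Finset (Fin n)} (hxy : s(x, y) ∈ M) (hxS : x ∉ S) (hyS : y ∉ S)
  (hO : ∀ v : Fin n, v ∈ O ↔ v ≠ x ∧ v ≠ y ∧ v ∉ S)

include hM hxy hxS hyS in
theorem pr_S_ne {s : Fin n} (hs : s ∈ S) : pr M s ≠ x ∧ pr M s ≠ y := by
  have hx : pr M x = y := pr_eq hM hxy
  have hy : pr M y = x := pr_eq hM (by rwa [Sym2.eq_swap] at hxy)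
  constructor
  · intro h
    have h2 := pr_pr hM s
    rw [h, hx] at h2
    exact hyS (h2 ▸ hs)
  · intro h
    have h2 := pr_pr hM s
    rw [h, hy] at h2
    exact hxS (h2 ▸ hs)

include hM hxy hxS hyS hO in
theorem S_split :
    (S.filter fun s => pr M s ∈ S).card + (S.filter fun s => pr M s ∈ O).card = S.card := by
  have h : S.filter (fun s => pr M s ∈ O) = S.filter (fun s => ¬ pr M s ∈ S) := by
    apply filter_congr
    intro s hs
    obtain ⟨h1, h2⟩ := pr_S_ne hM hxy hxS hyS hs
    simp only [hO, eq_iff_iff]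
    tauto
  rw [h, Finset.card_filter_add_card_filter_not]

include hM hxy hO in
theorem O_split :
    (O.filter fun t => pr M t ∈ O).card + (S.filter fun s => pr M s ∈ O).card = O.card := by
  have h3 : (O.filter fun t => pr M t ∈ S).card = (S.filter fun s => pr M s ∈ O).card := by
    apply Finset.card_bij (fun t _ => pr M t)
    · intro t ht
      simp only [mem_filter] at ht ⊢
      refine ⟨ht.2, ?_⟩
      rw [pr_pr hM]; exact ht.1
    · intro t1 h1 t2 h2 hpp
      have := congrArg (pr M) hpp
      rwa [pr_pr hM, pr_pr hM] at this
    · intro s hs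
      simp only [mem_filter] at hs
      exact ⟨pr M s, by simp only [mem_filter]; exact ⟨hs.2, by rw [pr_pr hM]; exact hs.1⟩,
        (pr_pr hM s)⟩
  rw [← h3]
  have h : O.filter (fun t => pr M t ∈ S) = O.filter (fun t => ¬ pr M t ∈ O) := by
    apply filter_congr
    intro t ht
    have htO := ht
    rw [hO] at htO
    have h1 : pr M t ≠ x := by
      intro h
      have := pr_pr hM t
      rw [h, pr_eq hM hxy] at this
      exact htO.2.1 this.symm
    have h2 : pr M t ≠ y := by
      intro h
      have := pr_pr hM t
      rw [h] at this
      have : pr M y = t := this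
      have hyx : pr M y = x := pr_eq hM (by rwa [Sym2.eq_swap] at hxy)
      rw [hyx] at this
      exact htO.1 this.symm
    simp only [hO, eq_iff_iff]
    tauto
  rw [h, Finset.card_filter_add_card_filter_not]
end part

/-- switch: replace edges `{s1, pr s1}, {s2, pr s2}` by `{s1,s2}, {pr s1, pr s2}`. -/
noncomputable def sw (M : Finset (Sym2 (Fin n))) (s1 s2 : Fin n) : Finset (Sym2 (Fin n)) :=
  insert s(s1, s2) (insert s(pr M s1, pr M s2)
    ((M.erase s(s1, pr M s1)).erase s(s2, pr M s2)))

section sw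
variable {M : Finset (Sym2 (Fin n))} (hM : IsPerfMatching n M) {s1 s2 : Fin n}
  (h12 : s1 ≠ s2) (ha : pr M s1 ≠ s2) (hb : pr M s2 ≠ s1)

include hM h12 in
theorem t_ne : pr M s1 ≠ pr M s2 := by
  intro h
  have := congrArg (pr M) h
  rw [pr_pr hM, pr_pr hM] at this
  exact h12 this

theorem sw_mem {f : Sym2 (Fin n)} : f ∈ sw M s1 s2 ↔ f = s(s1, s2) ∨
    f = s(pr M s1, pr M s2) ∨ (f ∈ M ∧ f ≠ s(s1, pr M s1) ∧ f ≠ s(s2, pr M s2)) := by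
  simp only [sw, mem_insert, mem_erase]
  tauto

include hM h12 ha hb in
theorem sw_isPM : IsPerfMatching n (sw M s1 s2) := by
  have htt := t_ne hM h12
  constructor
  · intro f hf
    rw [sw_mem] at hf
    rcases hf with rfl | rfl | ⟨hf, -, -⟩
    · simpa [Sym2.isDiag_iff_proj_eq] using h12
    · simpa [Sym2.isDiag_iff_proj_eq] using htt
    · exact hM.1 f hf
  · intro v
    -- expected edge
    by_cases hv1 : v = s1 ∨ v = s2
    · refine ⟨s(s1, s2), ⟨by rw [sw_mem]; tauto, by rw [Sym2.mem_iff]; tauto⟩, ?_⟩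
      rintro g ⟨hg, hvg⟩
      rw [sw_mem] at hg
      rcases hg with rfl | rfl | ⟨hgM, hg1, hg2⟩
      · rfl
      · rw [Sym2.mem_iff] at hvg
        exfalso
        rcases hv1 with h1 | h1 <;> rw [h1] at hvg <;> rcases hvg with h | h
        · exact pr_ne hM s1 h.symm
        · exact hb h.symm
        · exact ha h.symm
        · exact pr_ne hM s2 h.symm
      · exfalso
        have := (mem_edge_iff hM hgM).1 hvg
        rcases hv1 with rfl | rfl
        · exact hg1 this
        · exact hg2 this
    · push_neg at hv1
      by_cases hv2 : v = pr M s1 ∨ v = pr M s2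
      · refine ⟨s(pr M s1, pr M s2), ⟨by rw [sw_mem]; tauto, by rw [Sym2.mem_iff]; tauto⟩, ?_⟩
        rintro g ⟨hg, hvg⟩
        rw [sw_mem] at hg
        rcases hg with rfl | rfl | ⟨hgM, hg1, hg2⟩
        · exfalso
          rw [Sym2.mem_iff] at hvg
          rcases hvg with h | h
          · exact hv1.1 h
          · exact hv1.2 h
        · rfl
        · exfalso
          have hthis := (mem_edge_iff hM hgM).1 hvg
          rcases hv2 with h2 | h2 <;> rw [h2] at hthis <;> rw [pr_pr hM, Sym2.eq_swap] at hthis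
          · exact hg1 hthis
          · exact hg2 hthis
      · push_neg at hv2
        refine ⟨s(v, pr M v), ⟨?_, Sym2.mem_mk_left _ _⟩, ?_⟩
        · rw [sw_mem]
          refine Or.inr (Or.inr ⟨pr_spec hM v, ?_, ?_⟩)
          · intro h
            rw [Sym2.eq_iff] at h
            rcases h with ⟨h, -⟩ | ⟨h, -⟩
            · exact hv1.1 h
            · exact hv2.1 h
          · intro h
            rw [Sym2.eq_iff] at h
            rcases h with ⟨h, -⟩ | ⟨h, -⟩
            · exact hv1.2 h
            · exact hv2.2 h
        · rintro g ⟨hg, hvg⟩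
          rw [sw_mem] at hg
          rcases hg with rfl | rfl | ⟨hgM, hg1, hg2⟩
          · exfalso
            rw [Sym2.mem_iff] at hvg
            tauto
          · exfalso
            rw [Sym2.mem_iff] at hvg
            tauto
          · exact (mem_edge_iff hM hgM).1 hvg

include hM h12 ha hb in
theorem pr_sw_s1 : pr (sw M s1 s2) s1 = s2 :=
  pr_eq (sw_isPM hM h12 ha hb) (by rw [sw_mem]; tauto)

include hM h12 ha hb in
theorem pr_sw_t1 : pr (sw M s1 s2) (pr M s1) = pr M s2 :=
  pr_eq (sw_isPM hM h12 ha hb) (by rw [sw_mem]; tauto)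

include hM h12 ha hb in
theorem sw_sw : sw (sw M s1 s2) s1 (pr M s1) = M := by
  have e1 : pr (sw M s1 s2) s1 = s2 := pr_sw_s1 hM h12 ha hb
  have e2 : pr (sw M s1 s2) (pr M s1) = pr M s2 := pr_sw_t1 hM h12 ha hb
  ext f
  rw [show sw (sw M s1 s2) s1 (pr M s1) =
      insert s(s1, pr M s1) (insert s(s2, pr M s2)
        (((sw M s1 s2).erase s(s1, s2)).erase s(pr M s1, pr M s2))) by
    rw [sw, e1, e2]]
  simp only [mem_insert, mem_erase]
  constructor
  · rintro (rfl | rfl | ⟨hne1, hne2, hf⟩)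
    · exact pr_spec hM s1
    · exact pr_spec hM s2
    · rw [sw_mem] at hf
      rcases hf with rfl | rfl | ⟨hfM, -, -⟩
      · exact absurd rfl hne2
      · exact absurd rfl hne1
      · exact hfM
  · intro hf
    by_cases h1 : f = s(s1, pr M s1)
    · exact Or.inl h1
    by_cases h2 : f = s(s2, pr M s2)
    · exact Or.inr (Or.inl h2)
    · refine Or.inr (Or.inr ⟨?_, ?_, by rw [sw_mem]; exact Or.inr (Or.inr ⟨hf, h1, h2⟩)⟩)
      · intro h; rw [h] at hf
        have := pr_eq hM hf
        rw [pr_pr hM] at this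
        exact hb this.symm
      · intro h; rw [h] at hf
        exact ha (pr_eq hM hf)
end sw

section step
variable {x y : Fin n} {S O : Finset (Fin n)}

/-- matchings through `s(x,y)` with exactly `k` edges inside `S`. -/
noncomputable def A (x y : Fin n) (S : Finset (Fin n)) (k : ℕ) :
    Finset (Finset (Sym2 (Fin n))) :=
  (matchings n).filter (fun M => s(x, y) ∈ M ∧ (insideE S M).card = k)

theorem mem_A {k : ℕ} {M : Finset (Sym2 (Fin n))} :
    M ∈ A x y S k ↔ IsPerfMatching n M ∧ s(x, y) ∈ M ∧ (insideE S M).card = k := by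
  simp [A, matchings, Finset.mem_filter]

variable (hxS : x ∉ S) (hyS : y ∉ S)
  (hO : ∀ v : Fin n, v ∈ O ↔ v ≠ x ∧ v ≠ y ∧ v ∉ S)

include hxS hyS hO in
theorem sw_step {M : Finset (Sym2 (Fin n))} (hM : IsPerfMatching n M)
    (he : s(x, y) ∈ M) {s1 s2 : Fin n} (hs1 : s1 ∈ S) (hs2 : s2 ∈ S) (h12 : s1 ≠ s2)
    (ht1 : pr M s1 ∈ O) (ht2 : pr M s2 ∈ O) :
    IsPerfMatching n (sw M s1 s2) ∧ s(x, y) ∈ sw M s1 s2 ∧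
      insideE S (sw M s1 s2) = insert s(s1, s2) (insideE S M) ∧
      s(s1, s2) ∉ insideE S M := by
  have ht1S : pr M s1 ∉ S := ((hO _).1 ht1).2.2
  have ht2S : pr M s2 ∉ S := ((hO _).1 ht2).2.2
  have ha : pr M s1 ≠ s2 := fun h => ht1S (h ▸ hs2)
  have hb : pr M s2 ≠ s1 := fun h => ht2S (h ▸ hs1)
  have hpm := sw_isPM hM h12 ha hb
  refine ⟨hpm, ?_, ?_, ?_⟩
  · rw [sw_mem]
    refine Or.inr (Or.inr ⟨he, ?_, ?_⟩)
    · intro h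
      rw [Sym2.eq_iff] at h
      rcases h with ⟨h, -⟩ | ⟨-, h⟩
      · exact hxS (h ▸ hs1)
      · exact hyS (h ▸ hs1)
    · intro h
      rw [Sym2.eq_iff] at h
      rcases h with ⟨h, -⟩ | ⟨-, h⟩
      · exact hxS (h ▸ hs2)
      · exact hyS (h ▸ hs2)
  · ext f
    simp only [insideE, mem_filter, mem_insert, sw_mem]
    constructor
    · rintro ⟨rfl | rfl | ⟨hfM, hf1, hf2⟩, hall⟩
      · exact Or.inl rfl
      · exact absurd (hall _ (Sym2.mem_mk_left _ _)) ht1S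
      · exact Or.inr ⟨hfM, hall⟩
    · rintro (rfl | ⟨hfM, hall⟩)
      · refine ⟨Or.inl rfl, ?_⟩
        intro v hv
        rw [Sym2.mem_iff] at hv
        rcases hv with rfl | rfl <;> assumption
      · refine ⟨Or.inr (Or.inr ⟨hfM, ?_, ?_⟩), hall⟩
        · intro h
          rw [h] at hall
          exact ht1S (hall _ (Sym2.mem_mk_right s1 (pr M s1)))
        · intro h
          rw [h] at hall
          exact ht2S (hall _ (Sym2.mem_mk_right s2 (pr M s2)))
  · simp only [insideE, mem_filter, not_and]
    intro hmem
    exact absurd (pr_eq hM hmem) ha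

include hxS hyS hO in
theorem step_count (k : ℕ) :
    (A x y S k).card * ((S.card - 2 * k) * (S.card - 2 * k - 1)) ≤
      (A x y S (k + 1)).card * (2 * (k + 1) * (O.card + 2 * (k + 1) - S.card)) := by
  classical
  -- the two sigma sets
  set T := (A x y S k).sigma
      (fun M => (S.filter (fun s => pr M s ∈ O)).offDiag) with hT
  set R := (A x y S (k + 1)).sigma
      (fun M => (S.filter (fun s => pr M s ∈ S)) ×ˢ (O.filter (fun t => pr M t ∈ O))) with hR
  have key : T.card ≤ R.card := by
    apply Finset.card_le_card_of_injOn (fun p => ⟨sw p.1 p.2.1 p.2.2, (p.2.1, pr p.1 p.2.1)⟩)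
    · rintro ⟨M, s1, s2⟩ hp
      simp only [hT, Finset.mem_coe, Finset.mem_sigma, Finset.mem_offDiag, mem_filter] at hp
      obtain ⟨hMA, ⟨⟨hs1, ht1⟩, ⟨hs2, ht2⟩, h12⟩⟩ := hp
      rw [mem_A] at hMA
      obtain ⟨hM, he, hk⟩ := hMA
      obtain ⟨hpm, he', hins, hnew⟩ := sw_step hxS hyS hO hM he hs1 hs2 h12 ht1 ht2
      have ht1S : pr M s1 ∉ S := ((hO _).1 ht1).2.2
      have ht2S : pr M s2 ∉ S := ((hO _).1 ht2).2.2
      have ha : pr M s1 ≠ s2 := fun h => ht1S (h ▸ hs2)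
      have hb : pr M s2 ≠ s1 := fun h => ht2S (h ▸ hs1)
      simp only [hR, Finset.mem_coe, Finset.mem_sigma, Finset.mem_product, mem_filter]
      refine ⟨?_, ⟨hs1, ?_⟩, ht1, ?_⟩
      · rw [mem_A]
        exact ⟨hpm, he', by rw [hins, card_insert_of_notMem hnew, hk]⟩
      · rw [pr_sw_s1 hM h12 ha hb]; exact hs2
      · rw [pr_sw_t1 hM h12 ha hb]; exact ht2
    · rintro ⟨M, s1, s2⟩ hp ⟨M', u1, u2⟩ hp' heq
      simp only [hT, Finset.mem_coe, Finset.mem_sigma, Finset.mem_offDiag, mem_filter] at hp hp'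
      obtain ⟨hMA, ⟨⟨hs1, ht1⟩, ⟨hs2, ht2⟩, h12⟩⟩ := hp
      obtain ⟨hMA', ⟨⟨hu1, hv1⟩, ⟨hu2, hv2⟩, h12'⟩⟩ := hp'
      rw [mem_A] at hMA hMA'
      obtain ⟨hM, he, -⟩ := hMA
      obtain ⟨hM', he', -⟩ := hMA'
      have ht1S : pr M s1 ∉ S := ((hO _).1 ht1).2.2
      have ht2S : pr M s2 ∉ S := ((hO _).1 ht2).2.2
      have ha : pr M s1 ≠ s2 := fun h => ht1S (h ▸ hs2)
      have hb : pr M s2 ≠ s1 := fun h => ht2S (h ▸ hs1)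
      have hv1S : pr M' u1 ∉ S := ((hO _).1 hv1).2.2
      have hv2S : pr M' u2 ∉ S := ((hO _).1 hv2).2.2
      have ha' : pr M' u1 ≠ u2 := fun h => hv1S (h ▸ hu2)
      have hb' : pr M' u2 ≠ u1 := fun h => hv2S (h ▸ hu1)
      obtain ⟨hswe, hpr⟩ := Sigma.mk.inj_iff.1 heq
      have hpr' : (s1, pr M s1) = (u1, pr M' u1) := eq_of_heq hpr
      obtain ⟨h1eq, hteq⟩ := Prod.mk.injEq _ _ _ _ ▸ hpr'
      subst h1eq
      -- s2 = u2
      have hs2eq : s2 = u2 := by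
        have e1 : pr (sw M s1 s2) s1 = s2 := pr_sw_s1 hM h12 ha hb
        have e2 : pr (sw M' s1 u2) s1 = u2 := pr_sw_s1 hM' h12' ha' hb'
        rw [← e1, ← e2, hswe]
      subst hs2eq
      have hMeq : M = M' := by
        have r1 := sw_sw hM h12 ha hb
        have r2 := sw_sw hM' h12' ha' hb'
        rw [← r1, ← r2, hswe, hteq]
      subst hMeq
      rfl
  -- compute cards
  have hTc : T.card = (A x y S k).card * ((S.card - 2 * k) * (S.card - 2 * k - 1)) := by
    rw [hT, Finset.card_sigma]
    rw [Finset.sum_congr rfl (fun M hM => ?_), Finset.sum_const, smul_eq_mul]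
    rw [Finset.offDiag_card]
    rw [mem_A] at hM
    obtain ⟨hM', he, hk⟩ := hM
    have h1 := S_split hM' he hxS hyS hO
    have h2 := card_filter_in hM' S
    have h4 : (S.filter fun s => pr M s ∈ O).card = S.card - 2 * k := by omega
    rw [h4]
    cases h5 : S.card - 2 * k with
    | zero => rfl
    | succ d => rw [Nat.succ_sub_one, Nat.mul_succ, Nat.add_sub_cancel]
  have hRc : R.card = (A x y S (k + 1)).card *
      (2 * (k + 1) * (O.card + 2 * (k + 1) - S.card)) := by
    rw [hR, Finset.card_sigma]
    rw [Finset.sum_congr rfl (fun M hM => ?_), Finset.sum_const, smul_eq_mul]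
    rw [Finset.card_product]
    rw [mem_A] at hM
    obtain ⟨hM', he, hk⟩ := hM
    have h1 := S_split hM' he hxS hyS hO
    have h2 := card_filter_in hM' S
    have h3 := O_split hM' he hO
    have e1 : (S.filter fun s => pr M s ∈ S).card = 2 * (k + 1) := by omega
    have e2 : (O.filter fun t => pr M t ∈ O).card = O.card + 2 * (k + 1) - S.card := by omega
    rw [e1, e2]
  rw [hTc, hRc] at key
  exact key
include hxS hyS hO in
theorem A_le {k : ℕ} {M : Finset (Sym2 (Fin n))} (hMA : M ∈ A x y S k) :
    S.card ≤ O.card + 2 * k := by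
  rw [mem_A] at hMA
  obtain ⟨hM, he, hk⟩ := hMA
  have h1 := S_split hM he hxS hyS hO
  have h2 := card_filter_in hM S
  have h3 := O_split hM he hO
  omega
end step

theorem piadj_filter {M : Finset (Sym2 (Fin n))} (hM : IsPerfMatching n M)
    {x y : Fin n} (hxy : x ≠ y) (he : s(x, y) ∈ M) (G : SimpleGraph (Fin n)) :
    M.filter (fun f => PiAdj (G ⊔ SimpleGraph.fromEdgeSet (↑M)) M s(x, y) f) =
      insideE (Finset.univ.filter
        (fun v => v ≠ x ∧ v ≠ y ∧ G.Adj x v ∧ G.Adj y v)) M := by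
  ext f
  simp only [insideE, mem_filter, mem_univ, true_and]
  constructor
  · rintro ⟨hfM, -, -, hne, hadj⟩
    refine ⟨hfM, ?_⟩
    intro v hvf
    have hvx : v ≠ x := by
      rintro rfl
      exact hne (edge_unique hM he hfM (Sym2.mem_mk_left _ _) hvf)
    have hvy : v ≠ y := by
      rintro rfl
      exact hne (edge_unique hM he hfM (Sym2.mem_mk_right _ _) hvf)
    have hax : G.Adj x v := by
      have h := hadj x v (Or.inl (Sym2.mem_mk_left _ _)) (Or.inr hvf) (Ne.symm hvx)
      rw [SimpleGraph.sup_adj, SimpleGraph.fromEdgeSet_adj] at h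
      rcases h with h | ⟨h, -⟩
      · exact h
      · exfalso
        rw [Finset.mem_coe] at h
        have := edge_unique hM he h (Sym2.mem_mk_left _ _) (Sym2.mem_mk_left _ _)
        rw [Sym2.eq_iff] at this
        rcases this with ⟨-, h2⟩ | ⟨h2, -⟩
        · exact hvy h2.symm
        · exact hvx h2.symm
    have hay : G.Adj y v := by
      have h := hadj y v (Or.inl (Sym2.mem_mk_right _ _)) (Or.inr hvf) (Ne.symm hvy)
      rw [SimpleGraph.sup_adj, SimpleGraph.fromEdgeSet_adj] at h
      rcases h with h | ⟨h, -⟩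
      · exact h
      · exfalso
        rw [Finset.mem_coe] at h
        have h' : s(y, x) ∈ M := by rwa [Sym2.eq_swap]
        have := edge_unique hM h' h (Sym2.mem_mk_left _ _) (Sym2.mem_mk_left _ _)
        rw [Sym2.eq_iff] at this
        rcases this with ⟨-, h2⟩ | ⟨h2, -⟩
        · exact hvx h2.symm
        · exact hvy h2.symm
    exact ⟨hvx, hvy, hax, hay⟩
  · rintro ⟨hfM, hall⟩
    refine ⟨hfM, he, hfM, ?_, ?_⟩
    · intro heq
      have hx : x ∈ f := by rw [← heq]; exact Sym2.mem_mk_left _ _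
      exact (hall x hx).1 rfl
    · intro u v hu hv huv
      rw [SimpleGraph.sup_adj, SimpleGraph.fromEdgeSet_adj]
      have hmemxy : ∀ w : Fin n, w ∈ s(x, y) ↔ w = x ∨ w = y := fun w => Sym2.mem_iff
      rcases hu with hu | hu <;> rcases hv with hv | hv
      · -- both in e
        right
        rw [hmemxy] at hu hv
        refine ⟨?_, huv⟩
        rw [Finset.mem_coe]
        rcases hu with rfl | rfl <;> rcases hv with rfl | rfl
        · exact absurd rfl huv
        · exact he
        · rwa [Sym2.eq_swap]
        · exact absurd rfl huv
      · -- u in e, v in f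
        left
        rw [hmemxy] at hu
        obtain ⟨-, -, h1, h2⟩ := hall v hv
        rcases hu with rfl | rfl
        · exact h1
        · exact h2
      · -- u in f, v in e
        left
        rw [hmemxy] at hv
        obtain ⟨-, -, h1, h2⟩ := hall u hu
        rcases hv with rfl | rfl
        · exact h1.symm
        · exact h2.symm
      · -- both in f
        right
        refine ⟨?_, huv⟩
        rw [Finset.mem_coe]
        have h1 := (mem_edge_iff hM hfM).1 hu
        have h2 : v ∈ s(u, pr M u) := h1 ▸ hv
        rw [Sym2.mem_iff] at h2
        rcases h2 with rfl | rfl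
        · exact absurd rfl huv
        · rwa [← h1]


theorem geom_bound : ∀ T : ℕ, (∑ j ∈ Finset.range T, ((5:ℝ)/6)^j) ≤ 6 := by
  have h : ∀ T : ℕ, (∑ j ∈ Finset.range T, ((5:ℝ)/6)^j) ≤ 6 - 6*(5/6)^T := by
    intro T
    induction T with
    | zero => simp
    | succ T ih =>
      rw [Finset.sum_range_succ, pow_succ]
      linarith
  intro T
  have h2 : (0:ℝ) ≤ (5/6)^T := by positivity
  linarith [h T]

theorem keyineq (β A K N : ℝ) (hβ0 : 0 < β) (hβ1 : β ≤ 0.65) (hA : β * N - 2 ≤ A)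
    (hK0 : 0 ≤ K) (hK : K + 1 ≤ 3/8 * β^2 * N) (hN : 400 ≤ β^2 * N)
    (hB : 0 ≤ N - 2*A + 2*K) :
    12 * (K+1) * (N - 2*A + 2*K) ≤ 5 * (A - 2*K) * (A - 2*K - 1) := by
  set P : ℝ := K + 1 with hP
  have hN0 : 0 < N := by nlinarith
  have hW : 400 ≤ β * N := by nlinarith
  have hP1 : 1 ≤ P := by rw [hP]; linarith
  have hPmax : P ≤ 3/8 * β^2 * N := hK
  have hQ : 0 ≤ 3/8 * β^2 * N - P := by linarith
  have core : 5*(β*N - 2*P)^2 - 12*P*(N - 2*β*N + 2*P) ≥ 1/2 * β^2 * N^2 := by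
    nlinarith [mul_nonneg hQ (by nlinarith : (0:ℝ) ≤ 12*N - 4*β*N + 8*P),
      mul_nonneg (by linarith : (0:ℝ) ≤ 0.65 - β)
        (by positivity : (0:ℝ) ≤ β^3 * N^2),
      mul_pos (mul_pos hβ0 hβ0) (mul_pos hβ0 (mul_pos hN0 hN0))]
  have hD0 : β*N - 2*P ≥ 1/2 * β * N := by nlinarith
  have hu : 0 ≤ A - (β*N - 2) := by linarith
  have hDge : A - 2*K ≥ β*N - 2*P := by rw [hP]; linarith
  have goal0 : 12*P*(N - 2*β*N + 2*P + 2) ≤ 5*(β*N-2*P)*(β*N-2*P-1) := by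
    nlinarith [core, hW, hD0, hP1, hPmax, hN0]
  have hkey : 12*P*(N - 2*A + 2*K) ≤ 12*P*(N - 2*β*N + 2*P + 2) := by
    have h2 : 12*P*(N - 2*A + 2*K) =
        12*P*(N - 2*β*N + 2*P + 2) - 24*P*(A - (β*N - 2)) := by rw [hP]; ring
    rw [h2]
    have h3 : (0:ℝ) ≤ 24*P*(A - (β*N-2)) := mul_nonneg (by linarith) hu
    linarith
  have hstep2 : 5*(β*N-2*P)*(β*N-2*P-1) ≤ 5*(A-2*K)*(A-2*K-1) := by
    have h4 : 5*(A-2*K)*(A-2*K-1) - 5*(β*N-2*P)*(β*N-2*P-1) =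
        5*((A-2*K) - (β*N-2*P))*((A-2*K) + (β*N-2*P) - 1) := by ring
    have h5 : (0:ℝ) ≤ 5*((A-2*K) - (β*N-2*P))*((A-2*K) + (β*N-2*P) - 1) := by
      apply mul_nonneg (by linarith)
      linarith
    linarith
  linarith

theorem SO_card {x y : Fin n} (hxy : x ≠ y) (S : Finset (Fin n))
    (hxS : x ∉ S) (hyS : y ∉ S) :
    (univ.filter (fun v : Fin n => v ≠ x ∧ v ≠ y ∧ v ∉ S)).card + S.card + 2 = n := by
  set O := univ.filter (fun v : Fin n => v ≠ x ∧ v ≠ y ∧ v ∉ S) with hO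
  have hdisj : Disjoint O S := by
    rw [Finset.disjoint_left]
    intro v hv hvS
    simp only [hO, mem_filter] at hv
    exact hv.2.2.2 hvS
  have hunion : O ∪ S = univ \ {x, y} := by
    ext v
    simp only [hO, mem_union, mem_filter, mem_univ, true_and, mem_sdiff, mem_insert,
      mem_singleton, not_or]
    constructor
    · rintro (⟨h1, h2, h3⟩ | hvS)
      · exact ⟨h1, h2⟩
      · exact ⟨fun h => hxS (h ▸ hvS), fun h => hyS (h ▸ hvS)⟩
    · rintro ⟨h1, h2⟩
      by_cases hvS : v ∈ S
      · exact Or.inr hvS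
      · exact Or.inl ⟨h1, h2, hvS⟩
  have hc : O.card + S.card = (univ \ ({x, y} : Finset (Fin n))).card := by
    rw [← hunion, card_union_of_disjoint hdisj]
  have hxy2 : ({x, y} : Finset (Fin n)).card = 2 := by
    rw [card_insert_of_notMem (by simpa using hxy), card_singleton]
  have hsub : ({x, y} : Finset (Fin n)) ⊆ univ := subset_univ _
  have h2n : 2 ≤ n := by
    have := card_le_card hsub
    rwa [hxy2, card_univ, Fintype.card_fin] at this
  rw [hc, card_sdiff_of_subset hsub, hxy2, card_univ, Fintype.card_fin]
  omega

end PMwork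
open PMwork in
theorem pi_degree_concentration :
    ∀ α : ℝ, 1 / 2 < α → ∃ c : ℝ, 0 < c ∧ ∃ N : ℕ, ∀ m : ℕ, N ≤ m →
      ∀ G : SimpleGraph (Fin (2 * m)),
        (∀ v : Fin (2 * m),
            α * (2 * m) ≤ ((Finset.univ.filter fun w => G.Adj v w).card : ℝ)) →
        ∀ x y : Fin (2 * m), x ≠ y →
          ((((matchings (2 * m)).filter fun M => s(x, y) ∈ M ∧
              ((M.filter fun f =>
                  PiAdj (G ⊔ SimpleGraph.fromEdgeSet (↑M)) M s(x, y) f).card : ℝ) ≤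
                (2 * α - 1) ^ 3 * (2 * m) / 2).card : ℝ) /
            (((matchings (2 * m)).filter fun M => s(x, y) ∈ M).card : ℝ)) ≤
          Real.exp (-(c * (2 * α - 1) ^ 6 * (2 * m))) := by
  intro α hα
  have hβ0 : (0:ℝ) < 2 * α - 1 := by linarith
  have hL : 0 < Real.log (6/5) := Real.log_pos (by norm_num)
  refine ⟨Real.log (6/5) / (50 * (2*α-1)^4), by positivity, ?_⟩
  set β : ℝ := 2 * α - 1 with hβdef
  set L : ℝ := Real.log (6/5) with hLdef
  clear_value β L
  by_cases hc1 : (1:ℝ) ≤ α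
  · -- vacuous case: the minimum-degree hypothesis is impossible
    refine ⟨1, ?_⟩
    intro m hm G hdeg x y hxy
    exfalso
    have hv0 : 0 < 2 * m := by omega
    set v : Fin (2*m) := ⟨0, hv0⟩ with hv
    have h1 := hdeg v
    have h2 : (univ.filter fun w => G.Adj v w) ⊆ univ.erase v := by
      intro w hw
      rw [mem_filter] at hw
      exact mem_erase.2 ⟨(G.ne_of_adj hw.2).symm, mem_univ w⟩
    have h3 : (univ.erase v).card = 2*m - 1 := by
      rw [card_erase_of_mem (mem_univ v), card_univ, Fintype.card_fin]
    have h4 : ((univ.filter fun w => G.Adj v w).card : ℝ) ≤ 2*(m:ℝ) - 1 := by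
      have h5 := card_le_card h2
      rw [h3] at h5
      have h6 : ((univ.filter fun w => G.Adj v w).card : ℝ) ≤ ((2*m - 1 : ℕ) : ℝ) :=
        Nat.cast_le.2 h5
      have h7 : ((2*m - 1 : ℕ) : ℝ) = 2*(m:ℝ) - 1 := by
        rw [Nat.cast_sub (by omega : 1 ≤ 2*m)]
        push_cast
        ring
      linarith [h6, h7.le, h7.ge]
    have hm1 : (1:ℝ) ≤ (m:ℝ) := by exact_mod_cast hm
    nlinarith [h1, h4]
  push_neg at hc1
  have hβlt1 : β < 1 := by rw [hβdef]; linarith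
  by_cases hc2 : α < 0.825
  · -- main probabilistic case : β ≤ 0.65
    have hβ65 : β ≤ 0.65 := by rw [hβdef]; linarith
    have hlog6 : (0:ℝ) < Real.log 6 := Real.log_pos (by norm_num)
    refine ⟨⌈((400:ℝ) + 50 * Real.log 6 / L) / β^2⌉₊ + 1, ?_⟩
    intro m hm G hdeg x y hxy
    have hmR : ((400:ℝ) + 50 * Real.log 6 / L) / β^2 ≤ (m:ℝ) := by
      have h1 := Nat.le_ceil (((400:ℝ) + 50 * Real.log 6 / L) / β^2)
      have h2 : ((⌈((400:ℝ) + 50 * Real.log 6 / L) / β^2⌉₊ + 1 : ℕ) : ℝ) ≤ (m:ℝ) :=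
        Nat.cast_le.2 hm
      push_cast at h2
      linarith
    have hmpos : (0:ℝ) < (m:ℝ) := by
      have : (0:ℝ) < ((400:ℝ) + 50 * Real.log 6 / L) / β^2 := by positivity
      linarith
    have hmβ : (400:ℝ) + 50 * Real.log 6 / L ≤ β^2 * (m:ℝ) := by
      rw [div_le_iff₀ (by positivity : (0:ℝ) < β^2)] at hmR
      linarith
    have hn400 : (400:ℝ) ≤ β^2 * (2*(m:ℝ)) := by nlinarith [hlog6, hL, div_nonneg (by linarith : (0:ℝ) ≤ 50 * Real.log 6) hL.le]
    have hnlog : 50 * Real.log 6 / L ≤ β^2 * (2*(m:ℝ)) := by nlinarith [div_nonneg (by linarith : (0:ℝ) ≤ 50 * Real.log 6) hL.le]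
    -- the sets S and O
    set S : Finset (Fin (2*m)) :=
      univ.filter (fun v => v ≠ x ∧ v ≠ y ∧ G.Adj x v ∧ G.Adj y v) with hSdef
    set O : Finset (Fin (2*m)) := univ.filter (fun v => v ≠ x ∧ v ≠ y ∧ v ∉ S) with hOdef
    have hxS : x ∉ S := by simp [hSdef]
    have hyS : y ∉ S := by simp [hSdef]
    have hO : ∀ v : Fin (2*m), v ∈ O ↔ v ≠ x ∧ v ≠ y ∧ v ∉ S := by
      intro v; rw [hOdef, mem_filter]; simp
    have hcard : O.card + S.card + 2 = 2*m := by
      rw [hOdef]; exact SO_card hxy S hxS hyS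
    have hcardR : (O.card:ℝ) + (S.card:ℝ) + 2 = 2*(m:ℝ) := by exact_mod_cast hcard
    have hScard : β * (2*(m:ℝ)) - 2 ≤ (S.card : ℝ) := by
      have h1 : ((univ.filter fun w => G.Adj x w) ∪ (univ.filter fun w => G.Adj y w)).card
          + ((univ.filter fun w => G.Adj x w) ∩ (univ.filter fun w => G.Adj y w)).card
          = (univ.filter fun w => G.Adj x w).card + (univ.filter fun w => G.Adj y w).card :=
        card_union_add_card_inter _ _
      have h2 : ((univ.filter fun w => G.Adj x w) ∪ (univ.filter fun w => G.Adj y w)).card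
          ≤ 2*m := by
        calc _ ≤ (univ : Finset (Fin (2*m))).card := card_le_card (subset_univ _)
          _ = 2*m := by rw [card_univ, Fintype.card_fin]
      have h3 : (univ.filter fun w => G.Adj x w) ∩ (univ.filter fun w => G.Adj y w) ⊆
          insert x (insert y S) := by
        intro v hv
        rw [mem_inter, mem_filter, mem_filter] at hv
        obtain ⟨⟨-, hax⟩, -, hay⟩ := hv
        by_cases hvx : v = x
        · exact mem_insert.2 (Or.inl hvx)
        by_cases hvy : v = y
        · exact mem_insert.2 (Or.inr (mem_insert.2 (Or.inl hvy)))
        · refine mem_insert.2 (Or.inr (mem_insert.2 (Or.inr ?_)))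
          rw [hSdef, mem_filter]
          exact ⟨mem_univ v, hvx, hvy, hax, hay⟩
      have h4 : ((univ.filter fun w => G.Adj x w) ∩ (univ.filter fun w => G.Adj y w)).card
          ≤ S.card + 2 := by
        calc _ ≤ (insert x (insert y S)).card := card_le_card h3
          _ ≤ (insert y S).card + 1 := card_insert_le _ _
          _ ≤ S.card + 2 := by linarith [card_insert_le y S]
      have h5 := hdeg x
      have h6 := hdeg y
      have h7 : (univ.filter fun w => G.Adj x w).card + (univ.filter fun w => G.Adj y w).card
          ≤ 2*m + (S.card + 2) := by omega
      have h8 : ((univ.filter fun w => G.Adj x w).card:ℝ)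
          + ((univ.filter fun w => G.Adj y w).card:ℝ) ≤ 2*(m:ℝ) + ((S.card:ℝ) + 2) := by
        exact_mod_cast h7
      rw [hβdef]
      push_cast at h5 h6
      linarith
    -- thresholds
    set t₀ : ℕ := ⌊β^3 * (2*(m:ℝ)) / 2⌋₊ with ht₀def
    set g : ℕ := ⌈β^2 * (2*(m:ℝ)) / 25⌉₊ with hgdef
    set K₀ : ℕ := t₀ + g with hK₀def
    have hK₀R : (K₀:ℝ) + 1 ≤ 3/8 * β^2 * (2*(m:ℝ)) - 1 := by
      have h1 : (t₀:ℝ) ≤ β^3 * (2*(m:ℝ))/2 := Nat.floor_le (by positivity)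
      have h2 : (g:ℝ) < β^2 * (2*(m:ℝ))/25 + 1 := Nat.ceil_lt_add_one (by positivity)
      have h3 : β^3 * (2*(m:ℝ))/2 ≤ 0.325 * (β^2 * (2*(m:ℝ))) := by
        nlinarith [mul_nonneg (mul_nonneg hβ0.le hβ0.le) hmpos.le]
      have h4 : (K₀:ℝ) = (t₀:ℝ) + (g:ℝ) := by rw [hK₀def]; push_cast; ring
      rw [h4]
      nlinarith [hn400]
    -- one-step inequality
    have hstep : ∀ k, k < K₀ → 6 * (A x y S k).card ≤ 5 * (A x y S (k+1)).card := by
      intro k hk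
      have hkK : (k:ℝ) + 1 ≤ 3/8 * β^2 * (2*(m:ℝ)) - 1 := by
        have hk1 : ((k:ℕ):ℝ) + 1 ≤ (K₀:ℝ) := by exact_mod_cast Nat.succ_le_of_lt hk
        linarith
      have h2k2 : 2*k + 2 ≤ S.card := by
        have hr : (2*(k:ℝ) + 2) ≤ (S.card:ℝ) := by
          have hbm : (0:ℝ) ≤ β * (2*(m:ℝ)) := by positivity
          nlinarith [hkK, hScard, mul_nonneg (by linarith : (0:ℝ) ≤ 1 - 0.75*β) hbm]
        exact_mod_cast hr
      rcases le_or_gt S.card (O.card + 2*(k+1)) with hflag | hflag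
      · have h2kS : 2*k ≤ S.card := by omega
        have hsc := step_count hxS hyS hO k
        have hc1 : ((S.card - 2*k : ℕ):ℝ) = (S.card:ℝ) - 2*(k:ℝ) := by
          rw [Nat.cast_sub h2kS]; push_cast; ring
        have hc2 : ((S.card - 2*k - 1 : ℕ):ℝ) = (S.card:ℝ) - 2*(k:ℝ) - 1 := by
          rw [Nat.cast_sub (by omega : 1 ≤ S.card - 2*k), Nat.cast_sub h2kS]; push_cast; ring
        have hc3 : ((O.card + 2*(k+1) - S.card : ℕ):ℝ)
            = (O.card:ℝ) + 2*((k:ℝ)+1) - (S.card:ℝ) := by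
          rw [Nat.cast_sub hflag]; push_cast; ring
        have hB0 : (0:ℝ) ≤ 2*(m:ℝ) - 2*(S.card:ℝ) + 2*(k:ℝ) := by
          have : (S.card:ℝ) ≤ (O.card:ℝ) + 2*((k:ℝ)+1) := by exact_mod_cast hflag
          linarith
        have hkR := keyineq β (S.card:ℝ) (k:ℝ) (2*(m:ℝ)) hβ0 hβ65 hScard
          (by positivity) (by linarith) hn400 hB0
        have hQP : 6 * (2*(k+1) * (O.card + 2*(k+1) - S.card)) ≤
            5 * ((S.card - 2*k) * (S.card - 2*k - 1)) := by
          have hreal : (6:ℝ) * (2*((k:ℝ)+1) * ((O.card:ℝ) + 2*((k:ℝ)+1) - (S.card:ℝ))) ≤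
              5 * (((S.card:ℝ) - 2*(k:ℝ)) * ((S.card:ℝ) - 2*(k:ℝ) - 1)) := by
            nlinarith [hkR, hcardR]
          refine (Nat.cast_le (α := ℝ)).1 ?_
          push_cast [hc1, hc2, hc3]
          push_cast at hreal
          linarith
        have hP0 : 0 < (S.card - 2*k) * (S.card - 2*k - 1) :=
          Nat.mul_pos (by omega) (by omega)
        have hcalc : 6 * (A x y S k).card * ((S.card - 2*k) * (S.card - 2*k - 1)) ≤
            5 * (A x y S (k+1)).card * ((S.card - 2*k) * (S.card - 2*k - 1)) := by
          calc 6 * (A x y S k).card * ((S.card - 2*k) * (S.card - 2*k - 1))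
              = 6 * ((A x y S k).card * ((S.card - 2*k) * (S.card - 2*k - 1))) := by ring
            _ ≤ 6 * ((A x y S (k+1)).card * (2*(k+1) * (O.card + 2*(k+1) - S.card))) :=
                Nat.mul_le_mul_left 6 hsc
            _ = (A x y S (k+1)).card * (6 * (2*(k+1) * (O.card + 2*(k+1) - S.card))) := by
                ring
            _ ≤ (A x y S (k+1)).card * (5 * ((S.card - 2*k) * (S.card - 2*k - 1))) :=
                Nat.mul_le_mul_left _ hQP
            _ = 5 * (A x y S (k+1)).card * ((S.card - 2*k) * (S.card - 2*k - 1)) := by ring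
        exact Nat.le_of_mul_le_mul_right hcalc hP0
      · have hempty : A x y S k = ∅ := by
          rw [Finset.eq_empty_iff_forall_notMem]
          intro M hMA
          have := A_le hxS hyS hO hMA
          omega
        rw [hempty]
        simp
    -- iterated: chain bound
    have hchain : ∀ d k, k + d ≤ K₀ →
        ((A x y S k).card:ℝ) ≤ (5/6)^d * ((A x y S (k+d)).card:ℝ) := by
      intro d
      induction d with
      | zero => intro k _; simp
      | succ d ih =>
        intro k hk
        have h1 := hstep k (by omega)
        have h1' : ((A x y S k).card:ℝ) ≤ 5/6 * ((A x y S (k+1)).card:ℝ) := by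
          have h2 := (Nat.cast_le (α := ℝ)).2 h1
          push_cast at h2
          linarith
        have h2 := ih (k+1) (by omega)
        have h3 : k + 1 + d = k + (d+1) := by omega
        rw [h3] at h2
        calc ((A x y S k).card:ℝ) ≤ 5/6 * ((A x y S (k+1)).card:ℝ) := h1'
          _ ≤ 5/6 * ((5/6)^d * ((A x y S (k+(d+1))).card:ℝ)) := by
              apply mul_le_mul_of_nonneg_left h2 (by norm_num)
          _ = (5/6)^(d+1) * ((A x y S (k+(d+1))).card:ℝ) := by ring
    -- numerator rewrite
    have hpm_of : ∀ M ∈ matchings (2*m), IsPerfMatching (2*m) M := by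
      intro M hM
      rw [matchings, mem_filter] at hM
      exact hM.2
    have hNum1 : (matchings (2*m)).filter (fun M => s(x, y) ∈ M ∧
          ((M.filter fun f =>
              PiAdj (G ⊔ SimpleGraph.fromEdgeSet (↑M)) M s(x, y) f).card : ℝ) ≤
            β ^ 3 * (2 * m) / 2) =
        (matchings (2*m)).filter (fun M => s(x, y) ∈ M ∧ (insideE S M).card ≤ t₀) := by
      apply filter_congr
      intro M hMm
      have hpm := hpm_of M hMm
      constructor
      · rintro ⟨heM, hle⟩
        refine ⟨heM, ?_⟩
        rw [piadj_filter hpm hxy heM G, ← hSdef] at hle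
        apply Nat.le_floor
        rw [ht₀def] at *
        push_cast at hle ⊢
        linarith
      · rintro ⟨heM, hle⟩
        refine ⟨heM, ?_⟩
        rw [piadj_filter hpm hxy heM G, ← hSdef]
        have hfl : (t₀:ℝ) ≤ β^3 * (2*(m:ℝ))/2 := Nat.floor_le (by positivity)
        have : ((insideE S M).card:ℝ) ≤ (t₀:ℝ) := Nat.cast_le.2 hle
        push_cast at *
        linarith
    have hNum2 : ((matchings (2*m)).filter
          (fun M => s(x, y) ∈ M ∧ (insideE S M).card ≤ t₀)).card
        = ∑ k ∈ Finset.range (t₀+1), (A x y S k).card := by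
      rw [card_eq_sum_card_fiberwise
        (f := fun M => (insideE S M).card) (t := Finset.range (t₀+1)) ?_]
      · apply Finset.sum_congr rfl
        intro k hk
        rw [Finset.mem_range] at hk
        congr 1
        ext M
        simp only [mem_filter, A, matchings, mem_univ, true_and]
        constructor
        · rintro ⟨⟨hpm, heM, hle⟩, hXk⟩
          exact ⟨hpm, heM, hXk⟩
        · rintro ⟨hpm, heM, hXk⟩
          exact ⟨⟨hpm, heM, by omega⟩, hXk⟩
      · intro M hMf
        rw [mem_coe, mem_filter] at hMf
        show (insideE S M).card ∈ Finset.range (t₀+1)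
        rw [Finset.mem_range]
        omega
    have hAD : ∀ k, (A x y S k).card ≤
        ((matchings (2*m)).filter (fun M => s(x, y) ∈ M)).card := by
      intro k
      apply card_le_card
      intro M hMA
      have hMA' := hMA
      rw [mem_A] at hMA'
      rw [mem_filter]
      exact ⟨by rw [matchings, mem_filter]; exact ⟨mem_univ M, hMA'.1⟩, hMA'.2.1⟩
    set Dc : ℕ := ((matchings (2*m)).filter (fun M => s(x, y) ∈ M)).card with hDc
    have hsum : ((((matchings (2*m)).filter
          (fun M => s(x, y) ∈ M ∧ (insideE S M).card ≤ t₀)).card : ℕ) : ℝ)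
        ≤ 6 * (5/6)^g * (Dc:ℝ) := by
      rw [hNum2]
      push_cast
      have hrefl : ∑ k ∈ Finset.range (t₀+1), ((5:ℝ)/6)^(t₀ - k)
          = ∑ j ∈ Finset.range (t₀+1), ((5:ℝ)/6)^j := by
        have h := Finset.sum_range_reflect (fun j => ((5:ℝ)/6)^j) (t₀+1)
        simpa using h
      calc (∑ k ∈ Finset.range (t₀+1), ((A x y S k).card:ℝ))
          ≤ ∑ k ∈ Finset.range (t₀+1), (5/6)^(t₀-k) * ((5/6)^g * (Dc:ℝ)) := by
            apply Finset.sum_le_sum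
            intro k hk
            rw [Finset.mem_range] at hk
            have hd : k + (K₀ - k) = K₀ := by omega
            have h1 := hchain (K₀ - k) k (by omega)
            rw [hd] at h1
            have h2 : ((A x y S K₀).card:ℝ) ≤ (Dc:ℝ) := Nat.cast_le.2 (hAD K₀)
            have h3 : (5/6:ℝ)^(K₀-k) = (5/6)^(t₀-k) * (5/6)^g := by
              rw [← pow_add]
              congr 1
              omega
            calc ((A x y S k).card:ℝ)
                ≤ (5/6)^(K₀-k) * ((A x y S K₀).card:ℝ) := h1
              _ ≤ (5/6)^(K₀-k) * (Dc:ℝ) := by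
                  apply mul_le_mul_of_nonneg_left h2 (by positivity)
              _ = (5/6)^(t₀-k) * ((5/6)^g * (Dc:ℝ)) := by rw [h3]; ring
        _ = (∑ k ∈ Finset.range (t₀+1), ((5:ℝ)/6)^(t₀-k)) * ((5/6)^g * (Dc:ℝ)) := by
            rw [← Finset.sum_mul]
        _ ≤ 6 * ((5/6)^g * (Dc:ℝ)) := by
            apply mul_le_mul_of_nonneg_right ?_ (by positivity)
            rw [hrefl]
            exact geom_bound (t₀+1)
        _ = 6 * (5/6)^g * (Dc:ℝ) := by ring
    rw [hNum1]
    by_cases hden : Dc = 0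
    · have h0R : ((((matchings (2*m)).filter
          (fun M => s(x, y) ∈ M ∧ (insideE S M).card ≤ t₀)).card : ℕ) : ℝ) ≤ 0 := by
        rw [hden] at hsum
        simpa using hsum
      have h0 : (((matchings (2*m)).filter
          (fun M => s(x, y) ∈ M ∧ (insideE S M).card ≤ t₀)).card : ℕ) = 0 := by
        exact_mod_cast le_antisymm h0R (by positivity)
      rw [h0]
      simp only [Nat.cast_zero, zero_div]
      exact (Real.exp_pos _).le
    · have hdpos : (0:ℝ) < (Dc:ℝ) := by
        have := Nat.pos_of_ne_zero hden
        exact_mod_cast this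
      rw [div_le_iff₀ hdpos]
      have hxep : 6 * ((5:ℝ)/6)^g ≤ Real.exp (-(L / (50 * β^4) * β^6 * (2*(m:ℝ)))) := by
        have hpos6 : (0:ℝ) < 6*(5/6)^g := by positivity
        rw [← Real.exp_log hpos6]
        apply Real.exp_le_exp.2
        have hlogeq : Real.log (6*(5/6)^g) = Real.log 6 + (g:ℝ) * Real.log (5/6) := by
          rw [Real.log_mul (by norm_num) (by positivity), Real.log_pow]
        have hlog56 : Real.log ((5:ℝ)/6) = -L := by
          rw [hLdef, ← Real.log_inv]
          norm_num
        rw [hlogeq, hlog56]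
        have hgball : β^2*(2*(m:ℝ))/25 ≤ (g:ℝ) := Nat.le_ceil _
        have hgL : β^2*(2*(m:ℝ))/25 * L ≤ (g:ℝ) * L :=
          mul_le_mul_of_nonneg_right hgball hL.le
        have h50 : 50 * Real.log 6 ≤ β^2 * (2*(m:ℝ)) * L := by
          rw [div_le_iff₀ hL] at hnlog
          linarith
        have hexp : L / (50*β^4) * β^6 * (2*(m:ℝ)) = L * (β^2*(2*(m:ℝ)))/50 := by
          field_simp [hβ0.ne']
        rw [hexp]
        nlinarith [hgL, h50]
      calc ((((matchings (2*m)).filter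
            (fun M => s(x, y) ∈ M ∧ (insideE S M).card ≤ t₀)).card : ℕ) : ℝ)
          ≤ 6 * (5/6)^g * (Dc:ℝ) := hsum
        _ ≤ Real.exp (-(L / (50 * β^4) * β^6 * (2*(m:ℝ)))) * (Dc:ℝ) := by
            apply mul_le_mul_of_nonneg_right hxep hdpos.le
        _ = Real.exp (-(L / (50 * β^4) * β^6 * (2*m))) * (Dc:ℝ) := by push_cast; ring_nf
  · -- deterministic case : 0.65 ≤ β < 1
    push_neg at hc2
    have hβ65 : (0.65:ℝ) ≤ β := by rw [hβdef]; linarith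
    have hq : 0 < 2*β - 1 - β^3 := by
      have h1 : 0 < β^2 + β - 1 := by nlinarith [sq_nonneg (β - 0.65)]
      nlinarith [mul_pos (by linarith : (0:ℝ) < 1 - β) h1]
    refine ⟨⌈(4:ℝ)/(2*β - 1 - β^3)⌉₊ + 1, ?_⟩
    intro m hm G hdeg x y hxy
    have hmR : (4:ℝ)/(2*β - 1 - β^3) ≤ (m:ℝ) := by
      have h1 := Nat.le_ceil ((4:ℝ)/(2*β - 1 - β^3))
      have h2 : ((⌈(4:ℝ)/(2*β - 1 - β^3)⌉₊ + 1 : ℕ) : ℝ) ≤ (m:ℝ) := Nat.cast_le.2 hm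
      push_cast at h2
      linarith
    have h8 : (4:ℝ) ≤ (2*β - 1 - β^3) * (m:ℝ) := by
      rw [div_le_iff₀ hq] at hmR
      linarith
    set S : Finset (Fin (2*m)) :=
      univ.filter (fun v => v ≠ x ∧ v ≠ y ∧ G.Adj x v ∧ G.Adj y v) with hSdef
    set O : Finset (Fin (2*m)) := univ.filter (fun v => v ≠ x ∧ v ≠ y ∧ v ∉ S) with hOdef
    have hxS : x ∉ S := by simp [hSdef]
    have hyS : y ∉ S := by simp [hSdef]
    have hO : ∀ v : Fin (2*m), v ∈ O ↔ v ≠ x ∧ v ≠ y ∧ v ∉ S := by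
      intro v; rw [hOdef, mem_filter]; simp
    have hcard : O.card + S.card + 2 = 2*m := by
      rw [hOdef]; exact SO_card hxy S hxS hyS
    have hcardR : (O.card:ℝ) + (S.card:ℝ) + 2 = 2*(m:ℝ) := by exact_mod_cast hcard
    have hScard : β * (2*(m:ℝ)) - 2 ≤ (S.card : ℝ) := by
      have h1 : ((univ.filter fun w => G.Adj x w) ∪ (univ.filter fun w => G.Adj y w)).card
          + ((univ.filter fun w => G.Adj x w) ∩ (univ.filter fun w => G.Adj y w)).card
          = (univ.filter fun w => G.Adj x w).card + (univ.filter fun w => G.Adj y w).card :=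
        card_union_add_card_inter _ _
      have h2 : ((univ.filter fun w => G.Adj x w) ∪ (univ.filter fun w => G.Adj y w)).card
          ≤ 2*m := by
        calc _ ≤ (univ : Finset (Fin (2*m))).card := card_le_card (subset_univ _)
          _ = 2*m := by rw [card_univ, Fintype.card_fin]
      have h3 : (univ.filter fun w => G.Adj x w) ∩ (univ.filter fun w => G.Adj y w) ⊆
          insert x (insert y S) := by
        intro v hv
        rw [mem_inter, mem_filter, mem_filter] at hv
        obtain ⟨⟨-, hax⟩, -, hay⟩ := hv
        by_cases hvx : v = x
        · exact mem_insert.2 (Or.inl hvx)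
        by_cases hvy : v = y
        · exact mem_insert.2 (Or.inr (mem_insert.2 (Or.inl hvy)))
        · refine mem_insert.2 (Or.inr (mem_insert.2 (Or.inr ?_)))
          rw [hSdef, mem_filter]
          exact ⟨mem_univ v, hvx, hvy, hax, hay⟩
      have h4 : ((univ.filter fun w => G.Adj x w) ∩ (univ.filter fun w => G.Adj y w)).card
          ≤ S.card + 2 := by
        calc _ ≤ (insert x (insert y S)).card := card_le_card h3
          _ ≤ (insert y S).card + 1 := card_insert_le _ _
          _ ≤ S.card + 2 := by linarith [card_insert_le y S]
      have h5 := hdeg x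
      have h6 := hdeg y
      have h7 : (univ.filter fun w => G.Adj x w).card + (univ.filter fun w => G.Adj y w).card
          ≤ 2*m + (S.card + 2) := by omega
      have h8' : ((univ.filter fun w => G.Adj x w).card:ℝ)
          + ((univ.filter fun w => G.Adj y w).card:ℝ) ≤ 2*(m:ℝ) + ((S.card:ℝ) + 2) := by
        exact_mod_cast h7
      rw [hβdef]
      push_cast at h5 h6
      linarith
    have hnum : (matchings (2*m)).filter (fun M => s(x, y) ∈ M ∧
          ((M.filter fun f =>
              PiAdj (G ⊔ SimpleGraph.fromEdgeSet (↑M)) M s(x, y) f).card : ℝ) ≤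
            β ^ 3 * (2 * m) / 2) = ∅ := by
      rw [Finset.eq_empty_iff_forall_notMem]
      intro M hMf
      rw [mem_filter] at hMf
      obtain ⟨hMm, heM, hcond⟩ := hMf
      have hpm : IsPerfMatching (2*m) M := by
        rw [matchings, mem_filter] at hMm
        exact hMm.2
      rw [piadj_filter hpm hxy heM G, ← hSdef] at hcond
      have hdet : S.card ≤ O.card + 2 * (insideE S M).card :=
        A_le hxS hyS hO (mem_A.2 ⟨hpm, heM, rfl⟩)
      have hdetR : (S.card:ℝ) ≤ (O.card:ℝ) + 2*((insideE S M).card:ℝ) := by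
        exact_mod_cast hdet
      have hstep1 : 2*(β*(2*(m:ℝ))) - 4 - (2*(m:ℝ)) + 2 ≤ 2*((insideE S M).card:ℝ) := by
        linarith [hScard, hdetR, hcardR]
      linarith [hstep1, hcond, h8]
    rw [hnum]
    simp only [card_empty, Nat.cast_zero, zero_div]
    exact (Real.exp_pos _).le
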